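/- For every integer d ≥ 2 and all reals γ > 0, κ > 0 and α > 0, the integral ∫₀^∞ exp( −γ κ^{−d/2} G(√κ · u^{1/α}) ) du is finite. -/

import Mathlib

open MeasureTheory Real

/-- `ω_k`, the surface area of the (k−1)-dimensional Euclidean unit sphere. -/
noncomputable def omegaS (k : ℕ) : ℝ := 2 * Real.pi ^ ((k : ℝ) / 2) / Real.Gamma ((k : ℝ) / 2)

/-- `κ_k`, the volume of the k-dimensional Euclidean unit ball. -/
noncomputable def kappaV (k : ℕ) : ℝ := omegaS k / k

/-- `G(u) := κ_{d−1} ∫₀^u (2 e^{−t} (cosh u − cosh t))^{(d−1)/2} dt`. -/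
noncomputable def Gfun (d : ℕ) (u : ℝ) : ℝ :=
  kappaV (d - 1) *
    ∫ t in (0:ℝ)..u, (2 * Real.exp (-t) * (Real.cosh u - Real.cosh t)) ^ (((d : ℝ) - 1) / 2)

lemma exp_neg_rpow_integrable (c q : ℝ) (hc : 0 < c) (hq : 0 < q) :
    IntegrableOn (fun u : ℝ => Real.exp (-(c * u ^ q))) (Set.Ioi (0:ℝ)) := by
  set s : ℝ := (1 - q) / q with hs_def
  have hs : (-1 : ℝ) < s := by
    rw [hs_def, lt_div_iff₀ hq]; linarith
  have h1 : IntegrableOn (fun y : ℝ => Real.exp (-y) * y ^ (s + 1 - 1)) (Set.Ioi (0:ℝ)) :=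
    Real.GammaIntegral_convergent (by linarith)
  have h2 : IntegrableOn (fun y : ℝ => Real.exp (-(c * y)) * (c * y) ^ (s + 1 - 1))
      (Set.Ioi (0:ℝ)) := by
    have := (integrableOn_Ioi_comp_mul_left_iff
      (fun y : ℝ => Real.exp (-y) * y ^ (s + 1 - 1)) 0 hc).mpr ?_
    · simpa [mul_zero] using this
    · simpa [mul_zero] using h1
  have h3 : IntegrableOn
      (fun y : ℝ => (q⁻¹ * c ^ (-s)) * (Real.exp (-(c * y)) * (c * y) ^ (s + 1 - 1)))
      (Set.Ioi (0:ℝ)) := h2.const_mul _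
  set f : ℝ → ℝ := fun y => q⁻¹ * (y ^ s * Real.exp (-(c * y))) with hf_def
  have hf : IntegrableOn f (Set.Ioi (0:ℝ)) := by
    apply h3.congr_fun ?_ measurableSet_Ioi
    intro y hy
    have hy' : (0:ℝ) < y := hy
    rw [hf_def]
    simp only [add_sub_cancel_right]
    rw [Real.mul_rpow hc.le hy'.le, Real.rpow_neg hc.le]
    field_simp
  have key := (integrableOn_Ioi_comp_rpow_iff f (p := q) hq.ne').mpr hf
  apply key.congr_fun ?_ measurableSet_Ioi
  intro u hu
  have hu' : (0:ℝ) < u := hu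
  rw [hf_def]
  simp only [smul_eq_mul, abs_of_pos hq]
  rw [← Real.rpow_mul hu'.le]
  have h : q * s = 1 - q := by rw [hs_def]; field_simp
  rw [h, show q * u ^ (q - 1) * (q⁻¹ * (u ^ (1-q) * Real.exp (-(c * u ^ q)))) =
    (q * q⁻¹) * (u ^ (q-1) * u ^ (1-q)) * Real.exp (-(c * u ^ q)) from by ring,
    ← Real.rpow_add hu']
  simp [hq.ne']

lemma Gfun_continuous (d : ℕ) (hd : 2 ≤ d) : Continuous (Gfun d) := by
  have hp : (0:ℝ) ≤ ((d : ℝ) - 1) / 2 := by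
    have : (2:ℝ) ≤ (d:ℝ) := by exact_mod_cast hd
    linarith
  apply Continuous.mul continuous_const
  exact intervalIntegral.continuous_parametric_intervalIntegral_of_continuous
    (f := fun (u : ℝ) (t : ℝ) =>
      (2 * Real.exp (-t) * (Real.cosh u - Real.cosh t)) ^ (((d : ℝ) - 1) / 2))
    (by
      apply Continuous.rpow_const
      · fun_prop
      · exact fun _ => Or.inr hp)
    continuous_id

lemma kappaV_pos (d : ℕ) (hd : 2 ≤ d) : 0 < kappaV (d - 1) := by
  have hk : 1 ≤ d - 1 := by omega
  have hk' : (0:ℝ) < ((d - 1 : ℕ) : ℝ) := by exact_mod_cast Nat.lt_of_lt_of_le Nat.zero_lt_one hk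
  have h1 : 0 < omegaS (d - 1) := by
    unfold omegaS
    apply div_pos
    · positivity
    · exact Real.Gamma_pos_of_pos (by positivity)
  exact div_pos h1 hk'

lemma base_nonneg (d : ℕ) (v t : ℝ) (ht : t ∈ Set.Icc 0 v) :
    0 ≤ (2 * Real.exp (-t) * (Real.cosh v - Real.cosh t)) ^ (((d : ℝ) - 1) / 2) := by
  apply Real.rpow_nonneg
  have : Real.cosh t ≤ Real.cosh v := by
    rw [Real.cosh_le_cosh]
    rw [abs_of_nonneg ht.1, abs_of_nonneg (le_trans ht.1 ht.2)]
    exact ht.2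
  have he : 0 < Real.exp (-t) := Real.exp_pos _
  nlinarith

lemma Gfun_nonneg (d : ℕ) (hd : 2 ≤ d) (v : ℝ) (hv : 0 ≤ v) : 0 ≤ Gfun d v := by
  unfold Gfun
  apply mul_nonneg (kappaV_pos d hd).le
  exact intervalIntegral.integral_nonneg hv (fun t ht => base_nonneg d v t ht)

lemma Gfun_lower (d : ℕ) (hd : 2 ≤ d) (v : ℝ) (hv : 3 ≤ v) :
    kappaV (d - 1) * (v / 2) ≤ Gfun d v := by
  have hp : (0:ℝ) ≤ ((d : ℝ) - 1) / 2 := by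
    have : (2:ℝ) ≤ (d:ℝ) := by exact_mod_cast hd
    linarith
  set f : ℝ → ℝ := fun t =>
    (2 * Real.exp (-t) * (Real.cosh v - Real.cosh t)) ^ (((d : ℝ) - 1) / 2) with hf_def
  have hcf : Continuous f := by
    apply Continuous.rpow_const
    · fun_prop
    · exact fun _ => Or.inr hp
  have hii1 : IntervalIntegrable f volume 0 (v/2) := hcf.intervalIntegrable _ _
  have hii2 : IntervalIntegrable f volume (v/2) v := hcf.intervalIntegrable _ _
  -- f ≥ 1 on [0, v/2]
  have hone : ∀ t ∈ Set.Icc (0:ℝ) (v/2), 1 ≤ f t := by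
    intro t ht
    have ht0 : 0 ≤ t := ht.1
    have htv : t ≤ v / 2 := ht.2
    have hexp2 : Real.exp (-2 * t) ≤ 1 := Real.exp_le_one_iff.mpr (by linarith)
    have hclaim1 : 2 * Real.exp (-t) * Real.cosh t ≤ 2 := by
      rw [Real.cosh_eq]
      rw [show 2 * Real.exp (-t) * ((Real.exp t + Real.exp (-t)) / 2)
        = Real.exp (-t) * Real.exp t + Real.exp (-t) * Real.exp (-t) from by ring,
        ← Real.exp_add, ← Real.exp_add]
      simp only [neg_add_cancel, Real.exp_zero]
      have : Real.exp (-t + -t) = Real.exp (-2 * t) := by ring_nf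
      rw [this]
      linarith
    have hclaim2 : Real.exp (v/2) ≤ 2 * Real.exp (-t) * Real.cosh v := by
      have hmul : Real.exp (v - t) = Real.exp (-t) * Real.exp v := by
        rw [← Real.exp_add]; ring_nf
      calc Real.exp (v/2) ≤ Real.exp (v - t) := Real.exp_le_exp.mpr (by linarith)
      _ = Real.exp (-t) * Real.exp v := hmul
      _ ≤ 2 * Real.exp (-t) * Real.cosh v := by
          rw [Real.cosh_eq]
          have h1 := (Real.exp_pos (-v)).le
          have h2 := (Real.exp_pos (-t)).le
          nlinarith
    have hclaim3 : (3:ℝ) ≤ Real.exp (v/2) := by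
      have h4 : 1 + v/4 ≤ Real.exp (v/4) := by linarith [Real.add_one_le_exp (v/4)]
      have h5 : Real.exp (v/2) = Real.exp (v/4) * Real.exp (v/4) := by
        rw [← Real.exp_add]; ring_nf
      nlinarith
    have hbase : 1 ≤ 2 * Real.exp (-t) * (Real.cosh v - Real.cosh t) := by
      have := mul_comm (2 * Real.exp (-t)) (Real.cosh v)
      nlinarith [Real.exp_pos (-t)]
    calc (1:ℝ) = 1 ^ (((d : ℝ) - 1) / 2) := (Real.one_rpow _).symm
    _ ≤ f t := Real.rpow_le_rpow zero_le_one hbase hp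
  have hmid : v / 2 ≤ ∫ t in (0:ℝ)..(v/2), f t := by
    have := intervalIntegral.integral_mono_on (by linarith : (0:ℝ) ≤ v/2)
      (intervalIntegrable_const (c := (1:ℝ))) hii1 hone
    simpa using this
  have htail : 0 ≤ ∫ t in (v/2)..v, f t :=
    intervalIntegral.integral_nonneg (by linarith)
      (fun t ht => base_nonneg d v t ⟨by linarith [ht.1], ht.2⟩)
  have hsplit : (∫ t in (0:ℝ)..(v/2), f t) + ∫ t in (v/2)..v, f t = ∫ t in (0:ℝ)..v, f t :=
    intervalIntegral.integral_add_adjacent_intervals hii1 hii2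
  have hint : v / 2 ≤ ∫ t in (0:ℝ)..v, f t := by linarith
  unfold Gfun
  exact mul_le_mul_of_nonneg_left hint (kappaV_pos d hd).le

/-- for every integer `d ≥ 2` and all reals `γ, κ, α > 0`, the integral
`∫₀^∞ exp(−γ κ^{−d/2} G(√κ u^{1/α})) du` is finite. -/
theorem stmt8 (d : ℕ) (hd : 2 ≤ d) (γ κ α : ℝ) (hγ : 0 < γ) (hκ : 0 < κ) (hα : 0 < α) :
    IntegrableOn
      (fun u : ℝ =>
        Real.exp (-γ * κ ^ (-(d : ℝ) / 2) * Gfun d (Real.sqrt κ * u ^ (1 / α))))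
      (Set.Ioi (0 : ℝ)) := by
  set F : ℝ → ℝ := fun u : ℝ =>
    Real.exp (-γ * κ ^ (-(d : ℝ) / 2) * Gfun d (Real.sqrt κ * u ^ (1 / α))) with hF_def
  have hsk : (0:ℝ) < Real.sqrt κ := Real.sqrt_pos.mpr hκ
  have hr : (0:ℝ) < κ ^ (-(d : ℝ) / 2) := Real.rpow_pos_of_pos hκ _
  -- continuity on Ioi 0
  have hFc : ContinuousOn F (Set.Ioi (0:ℝ)) := by
    apply Real.continuous_exp.comp_continuousOn
    apply ContinuousOn.mul continuousOn_const
    apply (Gfun_continuous d hd).comp_continuousOn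
    apply ContinuousOn.mul continuousOn_const
    exact ContinuousOn.rpow_const continuousOn_id
      (fun x hx => Or.inl (ne_of_gt (Set.mem_Ioi.mp hx)))
  -- exponent is nonpositive on Ioi 0, so F ≤ 1 there
  have hFle1 : ∀ u ∈ Set.Ioi (0:ℝ), F u ≤ 1 := by
    intro u hu
    rw [hF_def]
    apply Real.exp_le_one_iff.mpr
    have hG : 0 ≤ Gfun d (Real.sqrt κ * u ^ (1 / α)) :=
      Gfun_nonneg d hd _ (mul_nonneg hsk.le (Real.rpow_nonneg (le_of_lt hu) _))
    have : -γ * κ ^ (-(d : ℝ) / 2) ≤ 0 := by nlinarith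
    exact mul_nonpos_of_nonpos_of_nonneg this hG
  set U0 : ℝ := max 1 ((3 / Real.sqrt κ) ^ α) with hU0_def
  have hU0 : (0:ℝ) < U0 := lt_of_lt_of_le one_pos (le_max_left _ _)
  -- piece 1 : Ioc 0 U0
  have hp1 : IntegrableOn F (Set.Ioc (0:ℝ) U0) := by
    have hmeas : AEStronglyMeasurable F (volume.restrict (Set.Ioc (0:ℝ) U0)) :=
      (hFc.mono Set.Ioc_subset_Ioi_self).aestronglyMeasurable measurableSet_Ioc
    apply Integrable.mono' (g := fun _ : ℝ => (1:ℝ))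
      ((integrableOn_const_iff (C := (1:ℝ))).mpr (Or.inr measure_Ioc_lt_top)) hmeas
    filter_upwards [ae_restrict_mem measurableSet_Ioc] with u hu
    rw [Real.norm_eq_abs, abs_of_pos (Real.exp_pos _)]
    exact hFle1 u hu.1
  -- piece 2 : Ioi U0
  set c : ℝ := γ * κ ^ (-(d : ℝ) / 2) * kappaV (d - 1) * Real.sqrt κ / 2 with hc_def
  have hc : 0 < c := by
    have := kappaV_pos d hd
    rw [hc_def]; positivity
  have hp2 : IntegrableOn F (Set.Ioi U0) := by
    have hmeas : AEStronglyMeasurable F (volume.restrict (Set.Ioi U0)) :=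
      (hFc.mono (Set.Ioi_subset_Ioi hU0.le)).aestronglyMeasurable measurableSet_Ioi
    have hint : IntegrableOn (fun u : ℝ => Real.exp (-(c * u ^ (1/α)))) (Set.Ioi U0) :=
      (exp_neg_rpow_integrable c (1/α) hc (by positivity)).mono_set
        (Set.Ioi_subset_Ioi hU0.le)
    apply Integrable.mono' hint hmeas
    filter_upwards [ae_restrict_mem measurableSet_Ioi] with u hu
    rw [Real.norm_eq_abs, abs_of_pos (Real.exp_pos _)]
    apply Real.exp_le_exp.mpr
    -- key: √κ * u^(1/α) ≥ 3
    have hu0 : (0:ℝ) < u := lt_trans hU0 hu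
    have hv3 : (3:ℝ) ≤ Real.sqrt κ * u ^ (1/α) := by
      have h1 : (3 / Real.sqrt κ) ^ α ≤ u := le_of_lt (lt_of_le_of_lt (le_max_right _ _) hu)
      have h2 : 3 / Real.sqrt κ ≤ u ^ (1/α) := by
        have hb : (0:ℝ) ≤ 3 / Real.sqrt κ := by positivity
        calc 3 / Real.sqrt κ = ((3 / Real.sqrt κ) ^ α) ^ (1/α) := by
              rw [← Real.rpow_mul hb, mul_one_div, div_self hα.ne', Real.rpow_one]
        _ ≤ u ^ (1/α) := Real.rpow_le_rpow (by positivity) h1 (by positivity)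
      calc (3:ℝ) = Real.sqrt κ * (3 / Real.sqrt κ) := by field_simp
      _ ≤ Real.sqrt κ * u ^ (1/α) := mul_le_mul_of_nonneg_left h2 hsk.le
    have hGl := Gfun_lower d hd _ hv3
    have hfac : 0 ≤ γ * κ ^ (-(d : ℝ) / 2) := by positivity
    have := mul_le_mul_of_nonneg_left hGl hfac
    rw [hc_def]
    nlinarith [this]
  have := hp1.union hp2
  rwa [Set.Ioc_union_Ioi_eq_Ioi hU0.le] at this
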